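/- Every E-linear code C of length 2n is two-sided symplectic nice: |C| · |C^{⊥_S}| = |E|^{2n} = 4^{2n}. -/

import Mathlib

open Finset

/-- The non-unital ring `E`, realized as pairs `(u, v) ∈ F₂ × F₂`
representing `uκ + vζ`. -/
def Ering : Type := (ZMod 2) × (ZMod 2)

namespace Ering

instance : AddCommGroup Ering := inferInstanceAs (AddCommGroup ((ZMod 2) × (ZMod 2)))
instance : DecidableEq Ering := inferInstanceAs (DecidableEq ((ZMod 2) × (ZMod 2)))
instance : Fintype Ering := inferInstanceAs (Fintype ((ZMod 2) × (ZMod 2)))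

instance : Mul Ering := ⟨fun a b => (a.1 * b.1, a.2 * b.1)⟩

instance : NonUnitalRing Ering :=
  { (inferInstance : AddCommGroup Ering), (inferInstance : Mul Ering) with
    left_distrib := by decide
    right_distrib := by decide
    zero_mul := by decide
    mul_zero := by decide
    mul_assoc := by decide }

/-- The generator κ. -/
def kappa : Ering := ((1 : ZMod 2), (0 : ZMod 2))
/-- The generator τ. -/
def tau : Ering := ((1 : ZMod 2), (1 : ZMod 2))
/-- ζ = κ + τ. -/
def zeta : Ering := ((0 : ZMod 2), (1 : ZMod 2))

/-- The scalar action of `F₂` on `E`: `u • e = e` if `u = 1`, else `0`. -/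
def fsmul (u : ZMod 2) (e : Ering) : Ering := if u = 1 then e else 0

/-- `E`-vectors of length `2n`, written as a pair `(u | v)` of halves of length `n`. -/
abbrev VE (n : ℕ) := (Fin n → Ering) × (Fin n → Ering)

/-- `F₂`-vectors of length `2n`, written as a pair of halves of length `n`. -/
abbrev VF (n : ℕ) := (Fin n → ZMod 2) × (Fin n → ZMod 2)

/-- Symplectic inner product on `E^{2n}`: `⟨(u|v),(u'|v')⟩ₛ = ⟨u,v'⟩ + ⟨v,u'⟩`. -/
def sympE {n : ℕ} (x y : VE n) : Ering := ∑ i, x.1 i * y.2 i + ∑ i, x.2 i * y.1 i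

/-- Symplectic inner product on `F₂^{2n}`. -/
def sympF {n : ℕ} (x y : VF n) : ZMod 2 := ∑ i, x.1 i * y.2 i + ∑ i, x.2 i * y.1 i

/-- An `E`-linear code: a left `E`-submodule of `E^{2n}`. -/
def IsLinearCode {n : ℕ} (C : Set (VE n)) : Prop :=
  (0 : VE n) ∈ C ∧ (∀ x ∈ C, ∀ y ∈ C, x + y ∈ C) ∧
    (∀ e : Ering, ∀ x ∈ C, ((fun i => e * x.1 i, fun i => e * x.2 i) : VE n) ∈ C)

/-- Componentwise reduction `π : E^{2n} → F₂^{2n}`, `π(uκ + vζ) = u`. -/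
def resVec {n : ℕ} (x : VE n) : VF n := (fun i => (x.1 i).1, fun i => (x.2 i).1)

/-- For `e ∈ E` and `v ∈ F₂^{2n}`, the vector `ev ∈ E^{2n}` with entries `vᵢ • e`. -/
def evec {n : ℕ} (e : Ering) (v : VF n) : VE n :=
  (fun i => fsmul (v.1 i) e, fun i => fsmul (v.2 i) e)

/-- The residue code `C_Res = π(C)`. -/
def resCode {n : ℕ} (C : Set (VE n)) : Set (VF n) := resVec '' C

/-- The torsion code `C_Tor = {v : ζv ∈ C}`. -/
def torCode {n : ℕ} (C : Set (VE n)) : Set (VF n) := {v | evec zeta v ∈ C}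

/-- The left symplectic dual. -/
def leftDual {n : ℕ} (C : Set (VE n)) : Set (VE n) := {z | ∀ w ∈ C, sympE z w = 0}

/-- The right symplectic dual. -/
def rightDual {n : ℕ} (C : Set (VE n)) : Set (VE n) := {z | ∀ w ∈ C, sympE w z = 0}

/-- The two-sided symplectic dual. -/
def dual {n : ℕ} (C : Set (VE n)) : Set (VE n) := leftDual C ∩ rightDual C

/-- The binary symplectic dual of `D ⊆ F₂^{2n}`. -/
def dualF {n : ℕ} (D : Set (VF n)) : Set (VF n) := {z | ∀ w ∈ D, sympF z w = 0}

/-- The two-sided symplectic hull. -/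
def SHull {n : ℕ} (C : Set (VE n)) : Set (VE n) := C ∩ dual C

/-- The left symplectic hull. -/
def LSHull {n : ℕ} (C : Set (VE n)) : Set (VE n) := C ∩ leftDual C

/-- The right symplectic hull. -/
def RSHull {n : ℕ} (C : Set (VE n)) : Set (VE n) := C ∩ rightDual C

/-- Symplectic hull of a binary code. -/
def SHullF {n : ℕ} (D : Set (VF n)) : Set (VF n) := D ∩ dualF D

/-- A free `E`-linear code: residue and torsion codes coincide. -/
def IsFree {n : ℕ} (C : Set (VE n)) : Prop := resCode C = torCode C

end Ering

section Aux

namespace Ering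

instance : Module (ZMod 2) Ering :=
  inferInstanceAs (Module (ZMod 2) ((ZMod 2) × (ZMod 2)))

lemma zmod2_cases : ∀ c : ZMod 2, c = 0 ∨ c = 1 := by decide

lemma fsmul_eq_smul : ∀ (u : ZMod 2) (e : Ering), fsmul u e = u • e := by decide

lemma fsmul_fst_zeta : ∀ u : ZMod 2, (fsmul u zeta).1 = 0 := by decide
lemma fsmul_snd_zeta : ∀ u : ZMod 2, (fsmul u zeta).2 = u := by decide
lemma fsmul_zeta_of_fst_zero : ∀ e : Ering, e.1 = 0 → fsmul e.2 zeta = e := by decide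
lemma fsmul_fst_zeta_eq : ∀ e : Ering, fsmul e.1 zeta = zeta * e := by decide
lemma fsmul_snd_zeta_eq : ∀ e : Ering, fsmul e.2 zeta = e + kappa * e := by decide
lemma mul_fst : ∀ a b : Ering, (a * b).1 = a.1 * b.1 := by decide
lemma mul_snd : ∀ a b : Ering, (a * b).2 = a.2 * b.1 := by decide

/-- the second-component ("ζ-part") extraction. -/
def sigVec {n : ℕ} (x : VE n) : VF n := (fun i => (x.1 i).2, fun i => (x.2 i).2)

/-- `resVec` as a linear map. -/
def piLin {n : ℕ} : VE n →ₗ[ZMod 2] VF n where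
  toFun := resVec
  map_add' _ _ := rfl
  map_smul' _ _ := rfl

/-- `sigVec` as a linear map. -/
def sigLin {n : ℕ} : VE n →ₗ[ZMod 2] VF n where
  toFun := sigVec
  map_add' _ _ := rfl
  map_smul' _ _ := rfl

/-- `evec zeta` as a linear map. -/
def zvecLin {n : ℕ} : VF n →ₗ[ZMod 2] VE n where
  toFun v := evec zeta v
  map_add' x y := by
    refine Prod.ext (funext fun i => ?_) (funext fun i => ?_) <;>
      simp [evec, fsmul_eq_smul, add_smul] <;> rfl
  map_smul' c x := by
    refine Prod.ext (funext fun i => ?_) (funext fun i => ?_) <;>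
      simp [evec, fsmul_eq_smul, mul_smul] <;> rfl

/-- The code as an `F₂`-submodule. -/
def codeSub {n : ℕ} (C : Set (VE n)) (hC : IsLinearCode C) : Submodule (ZMod 2) (VE n) where
  carrier := C
  zero_mem' := hC.1
  add_mem' ha hb := hC.2.1 _ ha _ hb
  smul_mem' c x hx := by
    rcases zmod2_cases c with rfl | rfl
    · simpa using hC.1
    · simpa using hx

lemma fst_add (a b : Ering) : (a + b).1 = a.1 + b.1 := rfl
lemma snd_add (a b : Ering) : (a + b).2 = a.2 + b.2 := rfl

lemma fst_sum {n : ℕ} (g : Fin n → Ering) : (∑ i, g i).1 = ∑ i, (g i).1 :=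
  Prod.fst_sum

lemma snd_sum {n : ℕ} (g : Fin n → Ering) : (∑ i, g i).2 = ∑ i, (g i).2 :=
  Prod.snd_sum

lemma sympE_fst {n : ℕ} (z w : VE n) :
    (sympE z w).1 = sympF (resVec z) (resVec w) := by
  simp only [sympE, sympF, fst_add, fst_sum, mul_fst, resVec]

lemma sympE_snd {n : ℕ} (z w : VE n) :
    (sympE z w).2 = sympF (sigVec z) (resVec w) := by
  simp only [sympE, sympF, snd_add, snd_sum, mul_snd, sigVec, resVec]

lemma sympF_comm {n : ℕ} (x y : VF n) : sympF x y = sympF y x := by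
  simp [sympF, mul_comm, add_comm]

lemma sigVec_evec_zeta {n : ℕ} (v : VF n) : sigVec (evec zeta v) = v := by
  refine Prod.ext (funext fun i => ?_) (funext fun i => ?_) <;>
    simp [sigVec, evec, fsmul_snd_zeta]

lemma resVec_evec_zeta {n : ℕ} (v : VF n) : resVec (evec zeta v) = 0 := by
  refine Prod.ext (funext fun i => ?_) (funext fun i => ?_) <;>
    simp [resVec, evec, fsmul_fst_zeta] <;> rfl

lemma resVec_mem_tor {n : ℕ} {C : Set (VE n)} (hC : IsLinearCode C) {w : VE n}
    (hw : w ∈ C) : resVec w ∈ torCode C := by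
  have h := hC.2.2 zeta w hw
  have : evec zeta (resVec w) = (fun i => zeta * w.1 i, fun i => zeta * w.2 i) := by
    refine Prod.ext (funext fun i => ?_) (funext fun i => ?_) <;>
      simp [evec, resVec, fsmul_fst_zeta_eq]
  simpa [torCode, this] using h

lemma sigVec_mem_tor {n : ℕ} {C : Set (VE n)} (hC : IsLinearCode C) {w : VE n}
    (hw : w ∈ C) : sigVec w ∈ torCode C := by
  have h := hC.2.1 w hw _ (hC.2.2 kappa w hw)
  have : evec zeta (sigVec w) = w + (fun i => kappa * w.1 i, fun i => kappa * w.2 i) := by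
    refine Prod.ext (funext fun i => ?_) (funext fun i => ?_) <;>
      simp [evec, sigVec, fsmul_snd_zeta_eq] <;> rfl
  simpa [torCode, this] using h

lemma ering_eq_zero_iff (e : Ering) : e = 0 ↔ e.1 = 0 ∧ e.2 = 0 := by
  constructor
  · rintro rfl; exact ⟨rfl, rfl⟩
  · intro h; exact Prod.ext h.1 h.2

/-- Characterization of the two-sided dual. -/
lemma mem_dual_iff {n : ℕ} {C : Set (VE n)} (hC : IsLinearCode C) (z : VE n) :
    z ∈ dual C ↔ resVec z ∈ dualF (torCode C) ∧ sigVec z ∈ dualF (resCode C) := by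
  constructor
  · rintro ⟨hl, hr⟩
    constructor
    · intro v hv
      have h := hr (evec zeta v) hv
      have h2 := congrArg Prod.snd h
      rw [sympE_snd, sigVec_evec_zeta] at h2
      rw [sympF_comm]; exact h2
    · rintro v ⟨w, hw, rfl⟩
      have h := hl w hw
      have h2 := congrArg Prod.snd h
      rw [sympE_snd] at h2
      exact h2
  · rintro ⟨h1, h2⟩
    constructor
    · intro w hw
      rw [ering_eq_zero_iff, sympE_fst, sympE_snd]
      exact ⟨h1 _ (resVec_mem_tor hC hw), h2 _ ⟨w, hw, rfl⟩⟩
    · intro w hw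
      rw [ering_eq_zero_iff, sympE_fst, sympE_snd]
      refine ⟨?_, ?_⟩
      · rw [sympF_comm]; exact h1 _ (resVec_mem_tor hC hw)
      · rw [sympF_comm]; exact h1 _ (sigVec_mem_tor hC hw)

/-- combine two binary vectors into an `E`-vector. -/
def combine {n : ℕ} (u v : VF n) : VE n :=
  (fun i => ((u.1 i, v.1 i) : Ering), fun i => ((u.2 i, v.2 i) : Ering))

/-- The dual is equivalent to a product of binary duals. -/
def dualEquiv {n : ℕ} (C : Set (VE n)) (hC : IsLinearCode C) :
    ↥(dual C) ≃ ↥(dualF (torCode C)) × ↥(dualF (resCode C)) where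
  toFun z := (⟨resVec z.1, ((mem_dual_iff hC z.1).1 z.2).1⟩,
              ⟨sigVec z.1, ((mem_dual_iff hC z.1).1 z.2).2⟩)
  invFun p := ⟨combine p.1.1 p.2.1, (mem_dual_iff hC _).2 ⟨p.1.2, p.2.2⟩⟩
  left_inv z := rfl
  right_inv p := rfl

/-- The symplectic form over `F₂` as a bilinear form. -/
def sympFBil {n : ℕ} : LinearMap.BilinForm (ZMod 2) (VF n) :=
  LinearMap.mk₂ (ZMod 2) sympF
    (fun x y z => by simp [sympF, add_mul, Finset.sum_add_distrib]; ring)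
    (fun c x y => by simp [sympF, Finset.mul_sum, mul_add, mul_assoc])
    (fun x y z => by simp [sympF, mul_add, Finset.sum_add_distrib]; ring)
    (fun c x y => by
      simp [sympF, Finset.mul_sum, mul_add]
      congr 1 <;> exact Finset.sum_congr rfl fun i _ => by ring)

lemma sympFBil_nondeg {n : ℕ} : (sympFBil (n := n)).Nondegenerate := by
  refine (LinearMap.IsRefl.nondegenerate_iff_separatingLeft (B := sympFBil (n := n))
    (fun x y h => by simpa [sympFBil, sympF_comm y x] using h)).2 ?_
  intro z hz
  refine Prod.ext (funext fun i => ?_) (funext fun i => ?_)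
  · have := hz ((0 : Fin n → ZMod 2), Pi.single i 1)
    simpa [sympFBil, sympF, Pi.single_apply, Finset.sum_ite_eq'] using this
  · have := hz ((Pi.single i 1 : Fin n → ZMod 2), 0)
    simpa [sympFBil, sympF, Pi.single_apply, Finset.sum_ite_eq'] using this

lemma sympFBil_refl {n : ℕ} : (sympFBil (n := n)).IsRefl := by
  intro x y h
  have : sympF y x = sympF x y := sympF_comm y x
  simpa [sympFBil, this] using h

lemma dualF_eq_orthogonal {n : ℕ} (D : Submodule (ZMod 2) (VF n)) :
    dualF (D : Set (VF n)) = ↑(sympFBil.orthogonal D) := by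
  ext z
  simp only [dualF, Set.mem_setOf_eq, SetLike.mem_coe,
    LinearMap.BilinForm.mem_orthogonal_iff]
  constructor
  · intro h w hw
    have := h w hw
    simpa [LinearMap.BilinForm.IsOrtho, sympFBil, sympF_comm w z] using this
  · intro h w hw
    have := h w hw
    simpa [LinearMap.BilinForm.IsOrtho, sympFBil, sympF_comm w z] using this

lemma card_submodule {V : Type} [AddCommGroup V] [Module (ZMod 2) V] [Finite V]
    (W : Submodule (ZMod 2) V) :
    Nat.card W = 2 ^ Module.finrank (ZMod 2) W := by
  have : Fintype W := Fintype.ofFinite W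
  rw [Nat.card_eq_fintype_card, Module.card_eq_pow_finrank (K := ZMod 2), ZMod.card]

lemma finrank_VF (n : ℕ) : Module.finrank (ZMod 2) (VF n) = 2 * n := by
  simp [Module.finrank_prod]; ring

end Ering

end Aux

open Ering
/-- every `E`-linear code is two-sided symplectic nice:
`|C|·|C^{⊥_S}| = 4^{2n}`. -/
theorem Ering.two_sided_nice {n : ℕ} (C : Set (VE n)) (hC : IsLinearCode C) :
    Nat.card ↥C * Nat.card ↥(dual C) = 4 ^ (2 * n) := by
  classical
  set Csub := codeSub C hC with hCsub
  set TorSub : Submodule (ZMod 2) (VF n) := Submodule.comap zvecLin Csub with hT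
  set ResSub : Submodule (ZMod 2) (VF n) := Submodule.map piLin Csub with hR
  have hTset : torCode C = (TorSub : Set (VF n)) := rfl
  have hRset : resCode C = (ResSub : Set (VF n)) := rfl
  set fR := Module.finrank (ZMod 2) ResSub with hfR
  set fT := Module.finrank (ZMod 2) TorSub with hfT
  -- rank-nullity for the restriction of π to C
  let f : ↥Csub →ₗ[ZMod 2] VF n := piLin.comp Csub.subtype
  have hrange : LinearMap.range f = ResSub := by
    rw [hR]
    show LinearMap.range (piLin.comp Csub.subtype) = _
    rw [LinearMap.range_comp, Submodule.range_subtype]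
  -- kernel of f is equivalent to the torsion code
  have hkerequiv : ↥(LinearMap.ker f) ≃ ↥TorSub := by
    refine ⟨fun x => ⟨sigVec x.1.1, ?_⟩, fun v => ⟨⟨evec zeta v.1, v.2⟩, ?_⟩, ?_, ?_⟩
    · have hx0 : resVec x.1.1 = 0 := x.2
      have : evec zeta (sigVec x.1.1) = x.1.1 := by
        refine Prod.ext (funext fun i => ?_) (funext fun i => ?_)
        · exact fsmul_zeta_of_fst_zero _ (congrFun (congrArg Prod.fst hx0) i)
        · exact fsmul_zeta_of_fst_zero _ (congrFun (congrArg Prod.snd hx0) i)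
      show zvecLin (sigVec x.1.1) ∈ Csub
      show evec zeta (sigVec x.1.1) ∈ C
      rw [this]
      exact x.1.2
    · show resVec (evec zeta v.1) = 0
      exact resVec_evec_zeta _
    · rintro ⟨⟨x, hx⟩, hx0⟩
      refine Subtype.ext (Subtype.ext ?_)
      have hx0' : resVec x = 0 := hx0
      refine Prod.ext (funext fun i => ?_) (funext fun i => ?_)
      · exact fsmul_zeta_of_fst_zero _ (congrFun (congrArg Prod.fst hx0') i)
      · exact fsmul_zeta_of_fst_zero _ (congrFun (congrArg Prod.snd hx0') i)
    · rintro ⟨v, hv⟩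
      exact Subtype.ext (sigVec_evec_zeta v)
  have hrn := LinearMap.finrank_range_add_finrank_ker f
  -- cardinality of C
  have hcardker : Nat.card ↥(LinearMap.ker f) = 2 ^ fT := by
    rw [Nat.card_congr hkerequiv, card_submodule]
  have hkerrank : Module.finrank (ZMod 2) ↥(LinearMap.ker f) = fT := by
    have := card_submodule (LinearMap.ker f)
    rw [hcardker] at this
    exact (Nat.pow_right_injective (le_refl 2) this.symm)
  have hcardC : Nat.card ↥C = 2 ^ (fR + fT) := by
    have h1 : Nat.card ↥C = Nat.card ↥Csub :=
      Nat.card_congr (Equiv.subtypeEquivRight fun _ => Iff.rfl)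
    rw [h1, card_submodule, ← hkerrank, ← hrn, hrange]
  -- cardinality of the dual
  have hdualT : Nat.card ↥(dualF (torCode C)) = 2 ^ (2 * n - fT) := by
    rw [hTset, dualF_eq_orthogonal]
    have h1 : Nat.card ↥((sympFBil.orthogonal TorSub : Submodule (ZMod 2) (VF n)) :
        Set (VF n)) = Nat.card ↥(sympFBil.orthogonal TorSub) := rfl
    rw [h1, card_submodule,
      LinearMap.BilinForm.finrank_orthogonal sympFBil_nondeg, finrank_VF]
  have hdualR : Nat.card ↥(dualF (resCode C)) = 2 ^ (2 * n - fR) := by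
    rw [hRset, dualF_eq_orthogonal]
    have h1 : Nat.card ↥((sympFBil.orthogonal ResSub : Submodule (ZMod 2) (VF n)) :
        Set (VF n)) = Nat.card ↥(sympFBil.orthogonal ResSub) := rfl
    rw [h1, card_submodule,
      LinearMap.BilinForm.finrank_orthogonal sympFBil_nondeg, finrank_VF]
  have hcardD : Nat.card ↥(dual C) = 2 ^ (2 * n - fT) * 2 ^ (2 * n - fR) := by
    rw [Nat.card_congr (dualEquiv C hC), Nat.card_prod, hdualT, hdualR]
  -- bounds
  have hTle : fT ≤ 2 * n := by
    have := Submodule.finrank_le TorSub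
    rwa [finrank_VF] at this
  have hRle : fR ≤ 2 * n := by
    have := Submodule.finrank_le ResSub
    rwa [finrank_VF] at this
  rw [hcardC, hcardD, ← pow_add, ← pow_add]
  have h4 : (4 : ℕ) ^ (2 * n) = 2 ^ (2 * (2 * n)) := by
    rw [show (4:ℕ) = 2 ^ 2 by norm_num, ← pow_mul]
  rw [h4]
  congr 1
  omega
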